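/- Let 𝔗 be a maximal collection of pairwise non-crossing arcs of the integer line which is locally finite, and let 𝔱 = (s,t) ∈ 𝔗. Then the arcs of 𝔗 that are spanned by 𝔱, viewed as diagonals of the polygon with vertices {s, s+1, ..., t}, form a triangulation of this polygon; in particular their number is t − s − 2. -/

import Mathlib

def IsArc (a : ℤ × ℤ) : Prop := a.1 ≤ a.2 - 2

def Cross (a b : ℤ × ℤ) : Prop :=
  (a.1 < b.1 ∧ b.1 < a.2 ∧ a.2 < b.2) ∨ (b.1 < a.1 ∧ a.1 < b.2 ∧ b.2 < a.2)

def Spans (s u : ℤ × ℤ) : Prop :=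
  (s.1 ≤ u.1 ∧ u.1 < u.2 ∧ u.2 < s.2) ∨ (s.1 < u.1 ∧ u.1 < u.2 ∧ u.2 ≤ s.2)

/-- A diagonal of the polygon with vertex set `{s, …, t}`: a pair `(u,v)` with
`s ≤ u < v ≤ t`, `v ≥ u + 2` and `(u,v) ≠ (s,t)`. -/
def IsDiag (s t : ℤ) (d : ℤ × ℤ) : Prop :=
  s ≤ d.1 ∧ d.1 + 2 ≤ d.2 ∧ d.2 ≤ t ∧ d ≠ (s, t)

lemma span_finite {T : Set (ℤ × ℤ)}
    (hlf : ∀ n : ℤ, {a ∈ T | a.1 = n ∨ a.2 = n}.Finite)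
    (s t : ℤ) : {u ∈ T | Spans (s, t) u}.Finite := by
  apply Set.Finite.subset ((Set.finite_Icc s t).biUnion (fun n _ => hlf n))
  rintro u ⟨huT, hsp⟩
  refine Set.mem_biUnion (show u.1 ∈ Set.Icc s t from ?_) ⟨huT, Or.inl rfl⟩
  rcases hsp with ⟨h1, h2, h3⟩ | ⟨h1, h2, h3⟩ <;> exact ⟨by omega, by omega⟩

lemma span_count {T : Set (ℤ × ℤ)}
    (harc : ∀ a ∈ T, IsArc a)
    (hnc : ∀ a ∈ T, ∀ b ∈ T, ¬ Cross a b)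
    (hmax : ∀ d : ℤ × ℤ, IsArc d → d ∉ T → ∃ u ∈ T, Cross d u ∨ Cross u d)
    (hlf : ∀ n : ℤ, {a ∈ T | a.1 = n ∨ a.2 = n}.Finite) :
    ∀ N : ℕ, ∀ s t : ℤ, (s, t) ∈ T → (t - s).toNat = N →
      {u ∈ T | Spans (s, t) u}.ncard = (t - s - 2).toNat := by
  intro N
  induction N using Nat.strong_induction_on with
  | _ N ih =>
  intro s t hst hN
  have hts : s + 2 ≤ t := by have := harc _ hst; simp only [IsArc] at this; omega
  by_cases hbase : t = s + 2
  · have hemp : {u ∈ T | Spans (s, t) u} = ∅ := by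
      ext u
      simp only [Set.mem_setOf_eq, Set.mem_empty_iff_false, iff_false, not_and]
      intro huT hsp
      have ha := harc u huT
      simp only [IsArc] at ha
      rcases hsp with ⟨h1, h2, h3⟩ | ⟨h1, h2, h3⟩ <;> omega
    rw [hemp, Set.ncard_empty]
    omega
  -- main case : t ≥ s + 3
  have hts3 : s + 3 ≤ t := by omega
  -- the candidate set for the ear vertex
  set V : Set ℤ := {v : ℤ | v = s + 1 ∨ ((s, v) ∈ T ∧ v < t)} with hV
  have hVfin : V.Finite := by
    apply Set.Finite.subset (((hlf s).image Prod.snd).insert (s + 1))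
    rintro v (rfl | ⟨hv, _⟩)
    · exact Set.mem_insert _ _
    · exact Set.mem_insert_of_mem _ ⟨(s, v), ⟨hv, Or.inl rfl⟩, rfl⟩
  obtain ⟨m, hmV, hmub⟩ : ∃ m ∈ V, ∀ v ∈ V, v ≤ m := by
    obtain ⟨m, hm1, hm2⟩ := hVfin.exists_maximalFor id V ⟨s + 1, Or.inl rfl⟩
    refine ⟨m, hm1, fun v hv => ?_⟩
    by_contra h
    push_neg at h
    exact absurd (hm2 hv (le_of_lt h)) (by simp; omega)
  have hm1 : s + 1 ≤ m := hmub _ (Or.inl rfl)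
  have hmub' : ∀ v, (s, v) ∈ T → v < t → v ≤ m := fun v h1 h2 => hmub v (Or.inr ⟨h1, h2⟩)
  have hmT : m ≠ s + 1 → (s, m) ∈ T := by
    intro h; rcases hmV with h' | h'
    · exact absurd h' h
    · exact h'.1
  have hm2 : m < t := by
    rcases hmV with h' | h'
    · omega
    · exact h'.2
  have hm2' : s + 2 ≤ m → (s, m) ∈ T := fun h => hmT (by omega)
  -- the other side of the ear is in T
  have hmtT : m + 2 ≤ t → (m, t) ∈ T := by
    intro hm2t
    by_contra hnot
    obtain ⟨u, huT, hcr⟩ := hmax (m, t) (by simp only [IsArc]; omega) hnot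
    obtain ⟨u1, u2⟩ := u
    have hau := harc _ huT
    simp only [IsArc] at hau
    have hkey : (m < u1 ∧ u1 < t ∧ t < u2) ∨ (u1 < m ∧ m < u2 ∧ u2 < t) := by
      rcases hcr with (⟨a, b, c⟩ | ⟨a, b, c⟩) | (⟨a, b, c⟩ | ⟨a, b, c⟩) <;>
        simp only at a b c <;> omega
    rcases hkey with ⟨h1, h2, h3⟩ | ⟨h1, h2, h3⟩
    · exact hnc _ hst _ huT (Or.inl ⟨by simp; omega, by simp; omega, by simp; omega⟩)
    · rcases lt_trichotomy u1 s with h | h | h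
      · exact hnc _ huT _ hst (Or.inl ⟨by simpa, by simp; omega, by simp; omega⟩)
      · subst h
        have := hmub' u2 huT (by omega)
        omega
      · have hsm : (s, m) ∈ T := hm2' (by omega)
        exact hnc _ hsm _ huT (Or.inl ⟨by simpa, by simpa, by simpa⟩)
  -- every spanned arc is on one side of m
  have hsplit : ∀ u1 u2 : ℤ, (u1, u2) ∈ T → Spans (s, t) (u1, u2) → u2 ≤ m ∨ m ≤ u1 := by
    intro u1 u2 huT hsp
    by_contra h
    push_neg at h
    obtain ⟨hml, hmr⟩ := h
    have hau := harc _ huT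
    simp only [IsArc] at hau
    have hs1 : s ≤ u1 := by rcases hsp with ⟨a, b, c⟩ | ⟨a, b, c⟩ <;> simp at a <;> omega
    rcases lt_or_eq_of_le hs1 with h | h
    · have hsm : (s, m) ∈ T := hm2' (by omega)
      exact hnc _ hsm _ huT (Or.inl ⟨by simpa, by simpa, by simpa⟩)
    · subst h
      have hu2t : u2 < t := by
        rcases hsp with ⟨a, b, c⟩ | ⟨a, b, c⟩
        · simpa using c
        · simp at a
      have := hmub' u2 huT hu2t
      omega
  -- the decomposition
  set S : Set (ℤ × ℤ) := {u ∈ T | Spans (s, t) u} with hS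
  set S1 : Set (ℤ × ℤ) := {u ∈ T | Spans (s, m) u} with hS1
  set S2 : Set (ℤ × ℤ) := {u ∈ T | Spans (m, t) u} with hS2
  set E : Set (ℤ × ℤ) :=
      {u : ℤ × ℤ | (u = (s, m) ∧ s + 2 ≤ m) ∨ (u = (m, t) ∧ m + 2 ≤ t)} with hE
  have hSeq : S = S1 ∪ S2 ∪ E := by
    ext ⟨u1, u2⟩
    simp only [hS, hS1, hS2, hE, Set.mem_union, Set.mem_setOf_eq, Prod.mk.injEq]
    constructor
    · rintro ⟨huT, hsp⟩
      have hau := harc _ huT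
      simp only [IsArc] at hau
      have hb : s ≤ u1 ∧ u2 ≤ t ∧ (s < u1 ∨ u2 < t) := by
        rcases hsp with ⟨a, b, c⟩ | ⟨a, b, c⟩ <;> simp only at a b c <;>
          exact ⟨by omega, by omega, by omega⟩
      rcases hsplit u1 u2 huT hsp with hle | hge
      · by_cases he : u1 = s ∧ u2 = m
        · exact Or.inr (Or.inl ⟨⟨he.1, he.2⟩, by omega⟩)
        · refine Or.inl (Or.inl ⟨huT, ?_⟩)
          rcases lt_or_eq_of_le hb.1 with h | h
          · exact Or.inr ⟨by simpa, by simp; omega, by simpa⟩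
          · refine Or.inl ⟨by simp; omega, by simp; omega, by simp; omega⟩
      · by_cases he : u1 = m ∧ u2 = t
        · exact Or.inr (Or.inr ⟨⟨he.1, he.2⟩, by omega⟩)
        · refine Or.inl (Or.inr ⟨huT, ?_⟩)
          rcases lt_or_eq_of_le hge with h | h
          · exact Or.inr ⟨by simpa, by simp; omega, by simp; omega⟩
          · refine Or.inl ⟨by simp; omega, by simp; omega, by simp; omega⟩
    · rintro ((⟨huT, hsp⟩ | ⟨huT, hsp⟩) | (⟨⟨rfl, rfl⟩, hc⟩ | ⟨⟨rfl, rfl⟩, hc⟩))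
      · refine ⟨huT, ?_⟩
        have : s ≤ u1 ∧ u1 < u2 ∧ u2 ≤ m := by
          rcases hsp with ⟨a, b, c⟩ | ⟨a, b, c⟩ <;> simp only at a b c <;>
            exact ⟨by omega, by omega, by omega⟩
        exact Or.inl ⟨by simp; omega, by simp; omega, by simp; omega⟩
      · refine ⟨huT, ?_⟩
        have : m ≤ u1 ∧ u1 < u2 ∧ u2 ≤ t := by
          rcases hsp with ⟨a, b, c⟩ | ⟨a, b, c⟩ <;> simp only at a b c <;>
            exact ⟨by omega, by omega, by omega⟩
        exact Or.inr ⟨by simp; omega, by simp; omega, by simp; omega⟩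
      · exact ⟨hm2' hc, Or.inl ⟨by simp, by simp; omega, by simpa⟩⟩
      · exact ⟨hmtT hc, Or.inr ⟨by simp; omega, by simp; omega, by simp⟩⟩
  -- finiteness
  have hS1fin : S1.Finite := span_finite hlf s m
  have hS2fin : S2.Finite := span_finite hlf m t
  have hEfin : E.Finite := by
    apply Set.Finite.subset ((Set.finite_singleton ((m, t) : ℤ × ℤ)).insert (s, m))
    rintro u (⟨rfl, -⟩ | ⟨rfl, -⟩)
    · exact Set.mem_insert _ _
    · exact Set.mem_insert_of_mem _ rfl
  -- disjointness
  have hd12 : Disjoint S1 S2 := by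
    rw [Set.disjoint_left]
    rintro ⟨u1, u2⟩ ⟨-, hsp1⟩ ⟨-, hsp2⟩
    rcases hsp1 with ⟨a, b, c⟩ | ⟨a, b, c⟩ <;> rcases hsp2 with ⟨a', b', c'⟩ | ⟨a', b', c'⟩ <;>
      simp only at a b c a' b' c' <;> omega
  have hdE : Disjoint (S1 ∪ S2) E := by
    rw [Set.disjoint_left]
    rintro ⟨u1, u2⟩ hu hE'
    simp only [hE, Set.mem_setOf_eq, Prod.mk.injEq] at hE'
    rcases hE' with ⟨⟨rfl, rfl⟩, hc⟩ | ⟨⟨rfl, rfl⟩, hc⟩ <;>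
    · rcases hu with ⟨-, hsp⟩ | ⟨-, hsp⟩ <;>
        rcases hsp with ⟨a, b, c⟩ | ⟨a, b, c⟩ <;> simp only at a b c <;> omega
  -- cardinalities of the pieces
  have hc1 : S1.ncard = (m - s - 2).toNat := by
    by_cases h : s + 2 ≤ m
    · exact ih (m - s).toNat (by omega) s m (hm2' h) rfl
    · have hm' : m = s + 1 := by omega
      have : S1 = ∅ := by
        ext ⟨u1, u2⟩
        simp only [hS1, Set.mem_setOf_eq, Set.mem_empty_iff_false, iff_false, not_and]
        intro huT hsp
        have hau := harc _ huT
        simp only [IsArc] at hau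
        rcases hsp with ⟨a, b, c⟩ | ⟨a, b, c⟩ <;> simp only at a b c <;> omega
      rw [this, Set.ncard_empty]; omega
  have hc2 : S2.ncard = (t - m - 2).toNat := by
    by_cases h : m + 2 ≤ t
    · exact ih (t - m).toNat (by omega) m t (hmtT h) rfl
    · have hm' : m = t - 1 := by omega
      have : S2 = ∅ := by
        ext ⟨u1, u2⟩
        simp only [hS2, Set.mem_setOf_eq, Set.mem_empty_iff_false, iff_false, not_and]
        intro huT hsp
        have hau := harc _ huT
        simp only [IsArc] at hau
        rcases hsp with ⟨a, b, c⟩ | ⟨a, b, c⟩ <;> simp only at a b c <;> omega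
      rw [this, Set.ncard_empty]; omega
  have hcE : E.ncard = (if s + 2 ≤ m then 1 else 0) + (if m + 2 ≤ t then 1 else 0) := by
    by_cases h1 : s + 2 ≤ m <;> by_cases h2 : m + 2 ≤ t <;> simp only [h1, h2, if_true, if_false,
      if_pos, if_neg]
    · have : E = {(s, m), (m, t)} := by
        ext u
        simp only [hE, Set.mem_setOf_eq, Set.mem_insert_iff, Set.mem_singleton_iff]
        constructor
        · rintro (⟨rfl, -⟩ | ⟨rfl, -⟩) <;> simp
        · rintro (rfl | rfl)
          · exact Or.inl ⟨rfl, h1⟩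
          · exact Or.inr ⟨rfl, h2⟩
      rw [this, Set.ncard_pair (by simp [Prod.ext_iff]; omega)]
    · have : E = {(s, m)} := by
        ext u
        simp only [hE, Set.mem_setOf_eq, Set.mem_singleton_iff]
        constructor
        · rintro (⟨rfl, -⟩ | ⟨rfl, hc⟩)
          · rfl
          · omega
        · rintro rfl; exact Or.inl ⟨rfl, h1⟩
      rw [this, Set.ncard_singleton]
    · have : E = {(m, t)} := by
        ext u
        simp only [hE, Set.mem_setOf_eq, Set.mem_singleton_iff]
        constructor
        · rintro (⟨rfl, hc⟩ | ⟨rfl, -⟩)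
          · omega
          · rfl
        · rintro rfl; exact Or.inr ⟨rfl, h2⟩
      rw [this, Set.ncard_singleton]
    · omega
  -- put everything together
  rw [hSeq, Set.ncard_union_eq hdE (hS1fin.union hS2fin) hEfin,
    Set.ncard_union_eq hd12 hS1fin hS2fin, hc1, hc2, hcE]
  by_cases h1 : s + 2 ≤ m <;> by_cases h2 : m + 2 ≤ t <;>
    simp only [h1, h2, if_true, if_false, if_pos, if_neg] <;> omega

/-- Let 𝔗 be a locally finite maximal collection of pairwise non-crossing arcs and
`(s,t) ∈ 𝔗`.  Then the arcs of 𝔗 spanned by `(s,t)` form a triangulation of the polygon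
with vertices `{s, …, t}`: they are non-crossing diagonals, the collection is maximal
among such, and its cardinality is `t - s - 2`. -/
theorem spanned_arcs_triangulate
    (T : Set (ℤ × ℤ))
    (harc : ∀ a ∈ T, IsArc a)
    (hnc : ∀ a ∈ T, ∀ b ∈ T, ¬ Cross a b)
    (hmax : ∀ d : ℤ × ℤ, IsArc d → d ∉ T → ∃ u ∈ T, Cross d u ∨ Cross u d)
    (hlf : ∀ n : ℤ, {a ∈ T | a.1 = n ∨ a.2 = n}.Finite)
    (s t : ℤ) (hst : (s, t) ∈ T) :
    (∀ d ∈ {u ∈ T | Spans (s, t) u}, IsDiag s t d) ∧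
    (∀ d : ℤ × ℤ, IsDiag s t d →
      (∀ u ∈ {u ∈ T | Spans (s, t) u}, ¬ Cross d u ∧ ¬ Cross u d) →
      d ∈ {u ∈ T | Spans (s, t) u}) ∧
    {u ∈ T | Spans (s, t) u}.ncard = (t - s - 2).toNat := by
  refine ⟨?_, ?_, ?_⟩
  · rintro ⟨d1, d2⟩ ⟨hdT, hsp⟩
    have ha := harc _ hdT
    simp only [IsArc] at ha
    rcases hsp with ⟨a, b, c⟩ | ⟨a, b, c⟩ <;> simp only at a b c <;>
      exact ⟨by omega, by omega, by omega, by simp [Prod.ext_iff]; omega⟩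
  · rintro ⟨d1, d2⟩ ⟨hd1, hd2, hd3, hd4⟩ hncd
    have hd4' : ¬(d1 = s ∧ d2 = t) := fun ⟨h1, h2⟩ => hd4 (by rw [h1, h2])
    have hdsp : Spans (s, t) (d1, d2) := by
      rcases lt_or_eq_of_le hd1 with h | h
      · exact Or.inr ⟨h, by omega, hd3⟩
      · have : d2 ≠ t := fun h2 => hd4' ⟨h.symm, h2⟩
        exact Or.inl ⟨hd1, by omega, by omega⟩
    refine ⟨?_, hdsp⟩
    by_contra hnot
    obtain ⟨u, huT, hcr⟩ := hmax (d1, d2) (by simp only [IsArc]; omega) hnot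
    obtain ⟨u1, u2⟩ := u
    have hau := harc _ huT
    simp only [IsArc] at hau
    have hkey : (d1 < u1 ∧ u1 < d2 ∧ d2 < u2) ∨ (u1 < d1 ∧ d1 < u2 ∧ u2 < d2) := by
      rcases hcr with (⟨a, b, c⟩ | ⟨a, b, c⟩) | (⟨a, b, c⟩ | ⟨a, b, c⟩) <;>
        simp only at a b c <;> omega
    have husp : Spans (s, t) (u1, u2) := by
      rcases hkey with ⟨a, b, c⟩ | ⟨a, b, c⟩
      · -- d1 < u1 < d2 < u2
        have hu2t : u2 ≤ t := by
          by_contra h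
          exact hnc _ hst _ huT (Or.inl ⟨by simp; omega, by simp; omega, by simp; omega⟩)
        exact Or.inr ⟨by simp; omega, by simp; omega, by simpa⟩
      · -- u1 < d1 < u2 < d2
        have hu1s : s ≤ u1 := by
          by_contra h
          exact hnc _ huT _ hst (Or.inl ⟨by simp; omega, by simp; omega, by simp; omega⟩)
        exact Or.inl ⟨by simpa, by simp; omega, by simp; omega⟩
    obtain ⟨h1, h2⟩ := hncd (u1, u2) ⟨huT, husp⟩
    rcases hcr with h | h
    · exact h1 h
    · exact h2 h
  · exact span_count harc hnc hmax hlf (t - s).toNat s t hst rfl
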